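/- Let G be a nilpotent group. Then every generating set of G is an IG-set. -/

import Mathlib

open Pointwise
open scoped commutatorElement


lemma aux_nilpotent_sup_commutator :
    ∀ (n : ℕ) (G : Type*) [Group G] [Group.IsNilpotent G],
      Group.nilpotencyClass G ≤ n → ∀ H : Subgroup G, H ⊔ commutator G = ⊤ → H = ⊤ := by
  intro n
  induction n with
  | zero =>
    intro G _ _ hn H _
    have : Subsingleton G := nilpotencyClass_zero_iff_subsingleton.mp (Nat.le_zero.mp hn)
    exact Subsingleton.elim _ _
  | succ n ih =>
    intro G _ _ hn H hH
    set Z := Subgroup.center G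
    let π : G →* G ⧸ Z := QuotientGroup.mk' Z
    have hπ : Function.Surjective π := QuotientGroup.mk'_surjective Z
    have hq : Group.nilpotencyClass (G ⧸ Z) ≤ n := by
      rw [nilpotencyClass_quotient_center]
      omega
    have hmap : Subgroup.map π H ⊔ commutator (G ⧸ Z) = ⊤ := by
      have h1 : Subgroup.map π (commutator G) = commutator (G ⧸ Z) := by
        rw [_root_.commutator_def, _root_.commutator_def, Subgroup.map_commutator,
          Subgroup.map_top_of_surjective π hπ]
      rw [← h1, ← Subgroup.map_sup, hH, Subgroup.map_top_of_surjective π hπ]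
    have hHtop : Subgroup.map π H = ⊤ := ih (G ⧸ Z) hq _ hmap
    -- hence H ⊔ Z = ⊤
    have hHZ : H ⊔ Z = ⊤ := by
      have := congrArg (Subgroup.comap π) hHtop
      rwa [Subgroup.comap_map_eq, Subgroup.comap_top,
        (QuotientGroup.ker_mk' Z : π.ker = Z)] at this
    -- commutator G ≤ H
    have hC : commutator G ≤ H := by
      rw [_root_.commutator_def, Subgroup.commutator_le]
      intro g hg h hh
      have hg' : g ∈ ((H : Set G) * (Z : Set G)) := by
        rw [← Subgroup.mul_normal H Z, hHZ]; trivial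
      have hh' : h ∈ ((H : Set G) * (Z : Set G)) := by
        rw [← Subgroup.mul_normal H Z, hHZ]; trivial
      obtain ⟨a, ha, z, hz, rfl⟩ := hg'
      obtain ⟨b, hb, w, hw, rfl⟩ := hh'
      have hz' : ∀ x : G, x * z = z * x := fun x => Subgroup.mem_center_iff.mp hz x
      have hw' : ∀ x : G, x * w = w * x := fun x => Subgroup.mem_center_iff.mp hw x
      have conjz : ∀ x : G, a * z * x * (a * z)⁻¹ = a * x * a⁻¹ := fun x => by
        rw [mul_assoc a z x, ← hz' x]; group
      have e1 : ⁅a * z, b * w⁆ = ⁅a, b * w⁆ := by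
        simp only [commutatorElement_def]
        rw [show a * z * (b * w) * (a * z)⁻¹ = a * (b * w) * a⁻¹ from conjz _]
      have e2 : ⁅a, b * w⁆ = ⁅a, b⁆ := by
        simp only [commutatorElement_def]
        rw [← mul_assoc a b w, mul_assoc (a * b) w a⁻¹, ← hw' a⁻¹]
        group
      show ⁅a * z, b * w⁆ ∈ H
      rw [e1, e2, commutatorElement_def]
      exact H.mul_mem (H.mul_mem (H.mul_mem ha hb) (H.inv_mem ha)) (H.inv_mem hb)
    rw [← hH, sup_eq_left.mpr hC]

/-- `S` is an invariable generating set (IG-set) of `G`. -/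
def IsIGSet {G : Type*} [Group G] (S : Set G) : Prop :=
  ∀ f : G → G, Subgroup.closure ((fun s => (f s)⁻¹ * s * f s) '' S) = ⊤

theorem nilpotent_every_generating_set_is_IG
    {G : Type*} [Group G] [Group.IsNilpotent G]
    (S : Set G) (hS : Subgroup.closure S = ⊤) : IsIGSet S := by
  intro f
  set T := (fun s => (f s)⁻¹ * s * f s) '' S with hT
  set H := Subgroup.closure T with hHdef
  have key : H ⊔ commutator G = ⊤ := by
    rw [eq_top_iff, ← hS, Subgroup.closure_le]
    intro s hs
    have ht : (f s)⁻¹ * s * f s ∈ H := Subgroup.subset_closure ⟨s, hs, rfl⟩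
    have hcomm : ⁅s, (f s)⁻¹⁆ ∈ commutator G := by
      rw [_root_.commutator_def]
      exact Subgroup.commutator_mem_commutator (Subgroup.mem_top _) (Subgroup.mem_top _)
    have : s = ⁅s, (f s)⁻¹⁆ * ((f s)⁻¹ * s * f s) := by group
    rw [this]
    exact Subgroup.mul_mem _ (Subgroup.mem_sup_right hcomm) (Subgroup.mem_sup_left ht)
  exact aux_nilpotent_sup_commutator (Group.nilpotencyClass G) G le_rfl H key
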